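/- Let X_u and X_v be independent random variables (the model-form-uncertainty parameters and the shared model parameters respectively), and let X̃_ũ be a random variable independent of X_v (an alternative model-form-uncertainty parametrization). Let f(X_u, X_v) and q(X̃_ũ, X_v) be square-integrable real-valued outputs of the two models. Fix ε₁, ε₂ > 0 and assume: (1) E[ |Var(f(X_u,X_v) | X_v) − Var(q(X̃_ũ,X_v) | X_v)| ] < ε₁; (2) |Var(f(X_u,X_v)) − Var(q(X̃_ũ,X_v))| < ε₂; (3) Var(f(X_u,X_v)) = 1, and Var(q(X̃_ũ,X_v)) > 0. Then the grouped total Sobol' indices T_u = E[Var(f(X_u,X_v) | X_v)] / Var(f(X_u,X_v)) and T_ũ = E[Var(q(X̃_ũ,X_v) | X_v)] / Var(q(X̃_ũ,X_v)) satisfy |T_u − T_ũ| < ε₁ + ε₂. -/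

import Mathlib

open MeasureTheory ProbabilityTheory
open scoped ENNReal

/-- The conditional variance of a real random variable `f` given a sub-σ-algebra `m`:
`Var(f | m) = E[f² | m] − (E[f | m])²`. -/
noncomputable def cVar {Ω : Type*} (m : MeasurableSpace Ω) {m0 : MeasurableSpace Ω}
    (μ : Measure Ω) (f : Ω → ℝ) : Ω → ℝ :=
  fun ω => (μ[fun ω' => f ω' ^ 2 | m]) ω - ((μ[f | m]) ω) ^ 2

section Aux

variable {α : Type*} {m m0 : MeasurableSpace α} {μ : Measure α}

/-- The conditional expectation of an `L²` function is in `L²`. -/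
lemma memℒp_two_condexp (hm : m ≤ m0) [IsFiniteMeasure μ] {q : α → ℝ}
    (hq : MemLp q 2 μ) : MemLp (μ[q|m]) 2 μ := by
  haveI : SigmaFinite (μ.trim hm) := inferInstance
  set G := condExpL2 ℝ ℝ hm (hq.toLp q) with hG
  have h1 : (G : α → ℝ) =ᵐ[μ] μ[q|m] := by
    refine ae_eq_condExp_of_forall_setIntegral_eq hm (hq.integrable one_le_two)
      (fun s _ _ => (integrable_condExpL2_of_isFiniteMeasure hm).integrableOn)
      (fun s hs hμs => ?_) (aestronglyMeasurable_condExpL2 hm _)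
    rw [integral_condExpL2_eq hm (hq.toLp q) hs hμs.ne]
    exact setIntegral_congr_ae (hm s hs) ((hq.coeFn_toLp).mono fun x hx _ => hx)
  exact (Lp.memLp (G : Lp ℝ 2 μ)).ae_eq h1

/-- Basic facts about the integral of the conditional variance. -/
lemma cVar_integral_facts (hm : m ≤ m0) (μ : Measure α) [IsProbabilityMeasure μ]
    {q : α → ℝ} (hq : MemLp q 2 μ) :
    Integrable (cVar m μ q) μ ∧ 0 ≤ ∫ ω, cVar m μ q ω ∂μ ∧
      ∫ ω, cVar m μ q ω ∂μ ≤ variance q μ := by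
  haveI : SigmaFinite (μ.trim hm) := inferInstance
  set g := μ[q|m] with hgdef
  have hg2 : MemLp g 2 μ := memℒp_two_condexp hm hq
  have hq2 : Integrable (fun ω => q ω ^ 2) μ := hq.integrable_sq
  have hcond : Integrable (μ[fun ω => q ω ^ 2|m]) μ := integrable_condExp
  have hgsq : Integrable (fun ω => g ω ^ 2) μ := hg2.integrable_sq
  have hInt : Integrable (cVar m μ q) μ := by
    have := hcond.sub hgsq
    exact this
  -- product integrability
  have hmul : Integrable (g * q) μ := by
    have h12 : (1 : ℝ≥0∞) / 1 = 1 / 2 + 1 / 2 := by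
      rw [ENNReal.add_halves]; simp
    have := hq.smul hg2 (r := 1)
    rw [memLp_one_iff_integrable] at this
    simpa [smul_eq_mul] using this
  -- orthogonality: ∫ g * q = ∫ g ^ 2
  have hpull : μ[g * q|m] =ᵐ[μ] g * g :=
    (condExp_mul_of_stronglyMeasurable_left stronglyMeasurable_condExp hmul
      (hq.integrable one_le_two)).trans (by rfl)
  have horth : ∫ ω, g ω * q ω ∂μ = ∫ ω, g ω ^ 2 ∂μ := by
    have h1 : ∫ ω, (g * q) ω ∂μ = ∫ ω, (μ[g * q|m]) ω ∂μ := (integral_condExp hm).symm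
    have h2 : ∫ ω, (μ[g * q|m]) ω ∂μ = ∫ ω, (g * g) ω ∂μ := integral_congr_ae hpull
    simpa [Pi.mul_apply, sq] using h1.trans h2
  -- ∫ g² ≤ ∫ q²
  have hle : ∫ ω, g ω ^ 2 ∂μ ≤ ∫ ω, q ω ^ 2 ∂μ := by
    have h0 : 0 ≤ ∫ ω, (q ω - g ω) ^ 2 ∂μ := integral_nonneg fun ω => sq_nonneg _
    have hexp : ∫ ω, (q ω - g ω) ^ 2 ∂μ
        = ∫ ω, q ω ^ 2 ∂μ - 2 * ∫ ω, g ω * q ω ∂μ + ∫ ω, g ω ^ 2 ∂μ := by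
      have : (fun ω => (q ω - g ω) ^ 2)
          = fun ω => q ω ^ 2 - 2 * (g ω * q ω) + g ω ^ 2 := by
        funext ω; ring
      have i2 : Integrable (fun ω => 2 * (g ω * q ω)) μ := by
        simpa using hmul.const_mul 2
      have i1 : Integrable (fun ω => q ω ^ 2 - 2 * (g ω * q ω)) μ := hq2.sub i2
      rw [this, integral_add i1 hgsq, integral_sub hq2 i2, integral_const_mul]
    rw [hexp, horth] at h0
    linarith
  -- value of the integral of cVar
  have hval : ∫ ω, cVar m μ q ω ∂μ = ∫ ω, q ω ^ 2 ∂μ - ∫ ω, g ω ^ 2 ∂μ := by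
    have : ∫ ω, cVar m μ q ω ∂μ
        = ∫ ω, (μ[fun ω' => q ω' ^ 2|m]) ω ∂μ - ∫ ω, g ω ^ 2 ∂μ := by
      simp only [cVar]
      exact integral_sub hcond hgsq
    rw [this, integral_condExp hm]
  refine ⟨hInt, by rw [hval]; linarith, ?_⟩
  -- variance bound
  have hvq : variance q μ = ∫ ω, q ω ^ 2 ∂μ - (∫ ω, q ω ∂μ) ^ 2 := by
    simpa [sq] using variance_eq_sub hq
  have hvg : variance g μ = ∫ ω, g ω ^ 2 ∂μ - (∫ ω, g ω ∂μ) ^ 2 := by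
    simpa [sq] using variance_eq_sub hg2
  have hgg : ∫ ω, g ω ∂μ = ∫ ω, q ω ∂μ := integral_condExp hm
  have hvgpos : 0 ≤ variance g μ := variance_nonneg _ _
  rw [hgg] at hvg
  rw [hval, hvq]
  linarith [hvgpos, hvg]

end Aux

/-- **Robustness of grouped total Sobol' indices to the MFU parametrization**
(Proposition 3.2).  If the conditional variances given the shared parameters `X_v` are
`ε₁`-close in `L¹` and the total variances are `ε₂`-close, with `Var f = 1`, then the grouped
total Sobol' indices of the two MFU groups differ by less than `ε₁ + ε₂`. -/
theorem sobol_total_robustness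
    {Ω U V U' : Type*} [MeasurableSpace Ω] [MeasurableSpace U] [MeasurableSpace V]
    [MeasurableSpace U'] {μ : Measure Ω} [IsProbabilityMeasure μ]
    (Xu : Ω → U) (Xv : Ω → V) (Xu' : Ω → U')
    (hXu : Measurable Xu) (hXv : Measurable Xv) (hXu' : Measurable Xu')
    (hUV : IndepFun Xu Xv μ) (hU'V : IndepFun Xu' Xv μ)
    (F : U × V → ℝ) (Q : U' × V → ℝ) (hF : Measurable F) (hQ : Measurable Q)
    (f q : Ω → ℝ)
    (hf : f = fun ω => F (Xu ω, Xv ω)) (hq : q = fun ω => Q (Xu' ω, Xv ω))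
    (hfL2 : MemLp f 2 μ) (hqL2 : MemLp q 2 μ)
    (ε₁ ε₂ : ℝ) (hε₁ : 0 < ε₁) (hε₂ : 0 < ε₂)
    (h1 : ∫ ω, |cVar (MeasurableSpace.comap Xv inferInstance) μ f ω
        - cVar (MeasurableSpace.comap Xv inferInstance) μ q ω| ∂μ < ε₁)
    (h2 : |variance f μ - variance q μ| < ε₂)
    (h3 : variance f μ = 1) (h4 : 0 < variance q μ) :
    |(∫ ω, cVar (MeasurableSpace.comap Xv inferInstance) μ f ω ∂μ) / variance f μ
      - (∫ ω, cVar (MeasurableSpace.comap Xv inferInstance) μ q ω ∂μ) / variance q μ|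
      < ε₁ + ε₂ := by
  have hm : MeasurableSpace.comap Xv inferInstance ≤ _ := hXv.comap_le
  obtain ⟨hIf, hAf0, hAfle⟩ := cVar_integral_facts hm μ hfL2
  obtain ⟨hIq, hBq0, hBqle⟩ := cVar_integral_facts hm μ hqL2
  set A := ∫ ω, cVar (MeasurableSpace.comap Xv inferInstance) μ f ω ∂μ with hA
  set B := ∫ ω, cVar (MeasurableSpace.comap Xv inferInstance) μ q ω ∂μ with hB
  set Vq := variance q μ with hVq
  have hAB : |A - B| < ε₁ := by
    have h1' : A - B = ∫ ω, (cVar (MeasurableSpace.comap Xv inferInstance) μ f ω - cVar (MeasurableSpace.comap Xv inferInstance) μ q ω) ∂μ := (integral_sub hIf hIq).symm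
    have h2' : |∫ ω, (cVar (MeasurableSpace.comap Xv inferInstance) μ f ω - cVar (MeasurableSpace.comap Xv inferInstance) μ q ω) ∂μ|
        ≤ ∫ ω, |cVar (MeasurableSpace.comap Xv inferInstance) μ f ω - cVar (MeasurableSpace.comap Xv inferInstance) μ q ω| ∂μ := by
      simpa [Real.norm_eq_abs] using
        norm_integral_le_integral_norm (μ := μ) fun ω => cVar (MeasurableSpace.comap Xv inferInstance) μ f ω - cVar (MeasurableSpace.comap Xv inferInstance) μ q ω
    rw [h1']
    exact lt_of_le_of_lt h2' h1
  have hVq1 : |Vq - 1| < ε₂ := by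
    rw [h3] at h2
    calc |Vq - 1| = |1 - Vq| := abs_sub_comm _ _
      _ < ε₂ := h2
  have hBXle : |B - B / Vq| ≤ |Vq - 1| := by
    have key : B - B / Vq = (B / Vq) * (Vq - 1) := by field_simp
    rw [key, abs_mul]
    have h01 : |B / Vq| ≤ 1 := by
      rw [abs_of_nonneg (div_nonneg hBq0 h4.le)]
      exact div_le_one_of_le₀ hBqle h4.le
    nlinarith [abs_nonneg (Vq - 1)]
  have htri : |A - B / Vq| ≤ |A - B| + |B - B / Vq| := abs_sub_le A B (B / Vq)
  have : |A - B / Vq| < ε₁ + ε₂ := by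
    calc |A - B / Vq| ≤ |A - B| + |B - B / Vq| := htri
      _ < ε₁ + ε₂ := add_lt_add_of_lt_of_le hAB (hBXle.trans hVq1.le)
  rw [h3, div_one]
  exact this
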